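/- Let c > 0 and let x : (−c, c) → ℝ be a twice continuously differentiable function with x(t) > 0 for all t ∈ (−c, c), satisfying x''(t)/(1 + x'(t)²) = 1/x(t) − (1/2)(x(t) − x'(t)·t) for all t ∈ (−c, c), with x'(0) = 0 and 0 < x(0) < √(4 − 2√2). Define f̄ : (−c, c) → ℝ by f̄(t) = e^{(x(t)² + t²)/8}·( x'(t)/(x(t)√(1 + x'(t)²)) − (x(t)x'(t) + t)/(4√(1 + x'(t)²)) ). Then f̄'(0) = e^{x(0)²/8}·(x(0)⁴ − 8x(0)² + 8)/(8x(0)²) > 0, and consequently there exists δ ∈ (0, c) such that f̄(δ) > 0. -/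

import Mathlib

/-- Let `x` be a positive `C²` solution on `(−c, c)` of the Gaussian
minimal-surface-of-revolution equation with `x'(0) = 0` and `0 < x 0 < √(4 − 2√2)`. Then
the conformal geodesic curvature function
`f̄ t = e^{(x t² + t²)/8} ( x'/(x √(1+x'²)) − (x x' + t)/(4 √(1+x'²)) )`
satisfies `f̄'(0) = e^{x(0)²/8} (x(0)⁴ − 8x(0)² + 8)/(8 x(0)²) > 0`, and consequently
there exists `δ ∈ (0, c)` with `f̄ δ > 0`. -/
theorem stmt11 (c : ℝ) (hc : 0 < c) (x : ℝ → ℝ)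
    (hx : ContDiffOn ℝ 2 x (Set.Ioo (-c) c))
    (hpos : ∀ t ∈ Set.Ioo (-c) c, 0 < x t)
    (hode : ∀ t ∈ Set.Ioo (-c) c,
      deriv (deriv x) t / (1 + (deriv x t) ^ 2)
        = 1 / x t - (1 / 2) * (x t - deriv x t * t))
    (h0 : deriv x 0 = 0) (hx0pos : 0 < x 0)
    (hx0lt : x 0 < Real.sqrt (4 - 2 * Real.sqrt 2))
    (fbar : ℝ → ℝ)
    (hfbar : fbar = fun t => Real.exp ((x t ^ 2 + t ^ 2) / 8) *
      (deriv x t / (x t * Real.sqrt (1 + (deriv x t) ^ 2)) -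
        (x t * deriv x t + t) / (4 * Real.sqrt (1 + (deriv x t) ^ 2)))) :
    deriv fbar 0 = Real.exp (x 0 ^ 2 / 8) * (x 0 ^ 4 - 8 * x 0 ^ 2 + 8) / (8 * x 0 ^ 2) ∧
    0 < deriv fbar 0 ∧
    ∃ δ : ℝ, 0 < δ ∧ δ < c ∧ 0 < fbar δ := by
  have hmem : (0:ℝ) ∈ Set.Ioo (-c) c := ⟨by linarith, hc⟩
  have hopen : IsOpen (Set.Ioo (-c) c) := isOpen_Ioo
  have ha : 0 < x 0 := hx0pos
  have haa : x 0 ≠ 0 := ne_of_gt ha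
  -- first derivative at 0
  have hX : HasDerivAt x 0 0 := by
    have := ((hx.contDiffAt (hopen.mem_nhds hmem)).differentiableAt
      (by norm_num)).hasDerivAt
    rwa [h0] at this
  -- second derivative at 0
  have hU : HasDerivAt (deriv x) (deriv (deriv x) 0) 0 := by
    have h1 : ContDiffOn ℝ 1 (deriv x) (Set.Ioo (-c) c) :=
      hx.deriv_of_isOpen hopen (by norm_num)
    exact ((h1.contDiffAt (hopen.mem_nhds hmem)).differentiableAt (by norm_num)).hasDerivAt
  have hA : deriv (deriv x) 0 = 1 / x 0 - x 0 / 2 := by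
    have h := hode 0 hmem
    rw [h0] at h
    simp at h
    rw [h]; ring
  set a := x 0 with ha_def
  set A := deriv (deriv x) 0 with hA_def
  -- components
  have hg : HasDerivAt (fun t => (x t ^ 2 + t ^ 2) / 8) 0 0 := by
    have := ((hX.pow 2).add ((hasDerivAt_id (0:ℝ)).pow 2)).div_const 8
    simpa using this
  have hexp : HasDerivAt (fun t => Real.exp ((x t ^ 2 + t ^ 2) / 8)) 0 0 := by
    simpa using hg.exp
  have hq : HasDerivAt (fun t => 1 + deriv x t ^ 2) 0 0 := by
    have := (hasDerivAt_const (0:ℝ) (1:ℝ)).fun_add (hU.pow 2)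
    simpa [h0] using this
  have hs : HasDerivAt (fun t => Real.sqrt (1 + deriv x t ^ 2)) 0 0 := by
    have := hq.sqrt (by simp [h0] : (1 + deriv x 0 ^ 2) ≠ 0)
    simpa using this
  have hsval : Real.sqrt (1 + deriv x 0 ^ 2) = 1 := by simp [h0]
  have hden1 : HasDerivAt (fun t => x t * Real.sqrt (1 + deriv x t ^ 2)) 0 0 := by
    simpa using hX.fun_mul hs
  have ht1 : HasDerivAt
      (fun t => deriv x t / (x t * Real.sqrt (1 + deriv x t ^ 2))) (A / a) 0 := by
    have hne : x 0 * Real.sqrt (1 + deriv x 0 ^ 2) ≠ 0 := by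
      rw [hsval]; simpa using haa
    convert hU.div hden1 hne using 1
    rfl
    rfl
    rfl
    rw [hsval, ← ha_def]
    field_simp
    ring
  have hnum2 : HasDerivAt (fun t => x t * deriv x t + t) (a * A + 1) 0 := by
    have := (hX.fun_mul hU).fun_add (hasDerivAt_id (0:ℝ))
    simpa [h0] using this
  have hden2 : HasDerivAt (fun t => 4 * Real.sqrt (1 + deriv x t ^ 2)) 0 0 := by
    simpa using hs.const_mul (4:ℝ)
  have ht2 : HasDerivAt
      (fun t => (x t * deriv x t + t) / (4 * Real.sqrt (1 + deriv x t ^ 2)))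
      ((a * A + 1) / 4) 0 := by
    have hne : (4:ℝ) * Real.sqrt (1 + deriv x 0 ^ 2) ≠ 0 := by rw [hsval]; norm_num
    convert hnum2.div hden2 hne using 1
    rfl
    rfl
    rfl
    rw [hsval]
    ring
  have hfb : HasDerivAt fbar (Real.exp (a ^ 2 / 8) * (A / a - (a * A + 1) / 4)) 0 := by
    rw [hfbar]
    have := hexp.fun_mul (ht1.fun_sub ht2)
    simpa [h0] using this
  have hval : Real.exp (a ^ 2 / 8) * (A / a - (a * A + 1) / 4)
      = Real.exp (a ^ 2 / 8) * (a ^ 4 - 8 * a ^ 2 + 8) / (8 * a ^ 2) := by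
    rw [hA]
    field_simp
    ring
  rw [hval] at hfb
  have hderiv : deriv fbar 0
      = Real.exp (a ^ 2 / 8) * (a ^ 4 - 8 * a ^ 2 + 8) / (8 * a ^ 2) := hfb.deriv
  -- positivity of the numerator
  have hs2 : Real.sqrt 2 ^ 2 = 2 := Real.sq_sqrt (by norm_num)
  have hs2pos : 0 < Real.sqrt 2 := Real.sqrt_pos.mpr (by norm_num)
  have hb : a ^ 2 < 4 - 2 * Real.sqrt 2 := by
    have := (Real.lt_sqrt ha.le).mp hx0lt
    linarith
  have hnumpos : 0 < a ^ 4 - 8 * a ^ 2 + 8 := by nlinarith [sq_nonneg (a^2 - 4)]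
  have hLpos : 0 < Real.exp (a ^ 2 / 8) * (a ^ 4 - 8 * a ^ 2 + 8) / (8 * a ^ 2) := by
    positivity
  refine ⟨hderiv, hderiv ▸ hLpos, ?_⟩
  -- existence of δ
  have hf0 : fbar 0 = 0 := by simp [hfbar, h0]
  have hslope := hasDerivAt_iff_tendsto_slope.mp hfb
  have h1 : ∀ᶠ t in nhdsWithin (0:ℝ) {(0:ℝ)}ᶜ, 0 < slope fbar 0 t :=
    hslope.eventually (eventually_gt_nhds hLpos)
  have h2 : ∀ᶠ t in nhdsWithin (0:ℝ) (Set.Ioi 0), 0 < slope fbar 0 t :=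
    h1.filter_mono (nhdsWithin_mono _ (fun t ht => ne_of_gt ht))
  have h3 : ∀ᶠ t in nhdsWithin (0:ℝ) (Set.Ioi 0), t < c :=
    eventually_nhdsWithin_of_eventually_nhds
      (Filter.Tendsto.eventually_lt_const hc Filter.tendsto_id)
  have h4 : ∀ᶠ t in nhdsWithin (0:ℝ) (Set.Ioi 0), 0 < t :=
    eventually_mem_nhdsWithin.mono (fun t ht => ht)
  obtain ⟨δ, hδ1, hδ2, hδ3⟩ := (h2.and (h3.and h4)).exists
  refine ⟨δ, hδ3, hδ2, ?_⟩
  have : slope fbar 0 δ = fbar δ / δ := by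
    simp [slope, hf0]
    ring
  rw [this] at hδ1
  have := mul_pos hδ1 hδ3
  rwa [div_mul_cancel₀ _ (ne_of_gt hδ3)] at this
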